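/- Let F be a graph in which every vertex has a non-neighbor (i.e., for every vertex v of F there is a vertex u ≠ v not adjacent to v; in particular this holds if F has an isolated vertex and at least 2 vertices). Then for every n ≥ 2, cex(n,F) ≥ n/2. Equivalently, every graph G on n ≥ 2 vertices that admits an induced F-decomposition has at least n/2 non-adjacent vertex pairs. -/

import Mathlib

open SimpleGraph Finset

/-- A decomposition of `G` into pairwise edge-disjoint (not necessarily induced) copies of `F`
covering all edges of `G`: every edge of `G` lies in the edge set of exactly one copy. -/
def HasDecompositionInto {α β : Type} (F : SimpleGraph α) (G : SimpleGraph β) : Prop :=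
  ∃ (ι : Type) (c : ι → α → β),
    (∀ t, Function.Injective (c t)) ∧
    (∀ t u v, F.Adj u v → G.Adj (c t u) (c t v)) ∧
    ∀ e ∈ G.edgeSet, ∃! t : ι, ∃ u v, F.Adj u v ∧ e = s(c t u, c t v)

/-- A decomposition of `G` into pairwise edge-disjoint *induced* copies of `F`
covering all edges of `G`. -/
def HasInducedDecompositionInto {α β : Type} (F : SimpleGraph α) (G : SimpleGraph β) : Prop :=
  ∃ (ι : Type) (c : ι → α → β),
    (∀ t, Function.Injective (c t)) ∧
    (∀ t u v, F.Adj u v ↔ G.Adj (c t u) (c t v)) ∧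
    ∀ e ∈ G.edgeSet, ∃! t : ι, ∃ u v, F.Adj u v ∧ e = s(c t u, c t v)

/-- `ex(n,F)`: the maximum number of edges of a graph on `n` vertices admitting
an induced `F`-decomposition. -/
noncomputable def exInd {α : Type} (F : SimpleGraph α) (n : ℕ) : ℕ :=
  sSup {m | ∃ G : SimpleGraph (Fin n), HasInducedDecompositionInto F G ∧ G.edgeSet.ncard = m}

/-- `cex(n,F) = C(n,2) - ex(n,F)`. -/
noncomputable def cex {α : Type} (F : SimpleGraph α) (n : ℕ) : ℕ :=
  n.choose 2 - exInd F n

/-- Every vertex of a graph admitting an induced `F`-decomposition (with `F` as in the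
hypothesis, and at least 2 vertices) has a non-neighbor. -/
lemma exists_nonneighbor_of_decomp {V : Type} (F : SimpleGraph V)
    (hF : ∀ v : V, ∃ u : V, u ≠ v ∧ ¬ F.Adj u v) {n : ℕ} (hn : 2 ≤ n)
    {G : SimpleGraph (Fin n)} (hG : HasInducedDecompositionInto F G) :
    ∀ x : Fin n, ∃ y : Fin n, Gᶜ.Adj x y := by
  obtain ⟨ι, c, hinj, hind, hcov⟩ := hG
  intro x
  by_cases hx : ∃ y, G.Adj x y
  · obtain ⟨y, hxy⟩ := hx
    have hmem : s(x, y) ∈ G.edgeSet := hxy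
    obtain ⟨t, ⟨u, v, huv, he⟩, -⟩ := hcov _ hmem
    rw [Sym2.eq_iff] at he
    -- x = c t u or x = c t v
    have : ∃ w : V, x = c t w := by
      rcases he with ⟨h1, -⟩ | ⟨h1, -⟩
      · exact ⟨u, h1⟩
      · exact ⟨v, h1⟩
    obtain ⟨w, hw⟩ := this
    obtain ⟨z, hz, hadj⟩ := hF w
    refine ⟨c t z, ?_, ?_⟩
    · rw [hw]
      intro h
      exact hz (hinj t h.symm)
    · rw [hw]
      intro h
      exact hadj ((hind t z w).mpr h.symm)
  · obtain ⟨y, hy⟩ := Fintype.exists_ne_of_one_lt_card (by rw [Fintype.card_fin]; omega) x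
    exact ⟨y, fun h => hy h.symm, fun h => hx ⟨y, h⟩⟩

/-- If every vertex of `F` has a non-neighbor, then `cex(n,F) ≥ n/2` for every `n ≥ 2`. -/
theorem cex_ge_half_of_forall_nonneighbor {V : Type} [Fintype V] (F : SimpleGraph V)
    (hF : ∀ v : V, ∃ u : V, u ≠ v ∧ ¬ F.Adj u v) :
    ∀ n : ℕ, 2 ≤ n → (n : ℝ) / 2 ≤ (cex F n : ℝ) := by
  intro n hn
  -- every graph in the sup set has at most `n.choose 2 - (n+1)/2` edges
  have key : ∀ m ∈ {m | ∃ G : SimpleGraph (Fin n), HasInducedDecompositionInto F G ∧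
      G.edgeSet.ncard = m}, m ≤ n.choose 2 - (n + 1) / 2 := by
    rintro m ⟨G, hG, rfl⟩
    classical
    have hdeg : ∀ x : Fin n, 0 < Gᶜ.degree x := by
      intro x
      rw [SimpleGraph.degree_pos_iff_exists_adj]
      exact exists_nonneighbor_of_decomp F hF hn hG x
    have hsum : n ≤ 2 * Gᶜ.edgeFinset.card := by
      calc n = ∑ _x : Fin n, 1 := by simp
        _ ≤ ∑ x : Fin n, Gᶜ.degree x := Finset.sum_le_sum (fun x _ => hdeg x)
        _ = 2 * Gᶜ.edgeFinset.card := Gᶜ.sum_degrees_eq_twice_card_edges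
    have hsplit : G.edgeFinset.card + Gᶜ.edgeFinset.card = n.choose 2 := by
      have hdisj : Disjoint G.edgeFinset Gᶜ.edgeFinset :=
        (SimpleGraph.disjoint_edgeFinset).mpr disjoint_compl_right
      have hunion : G.edgeFinset ∪ Gᶜ.edgeFinset = (⊤ : SimpleGraph (Fin n)).edgeFinset := by
        ext e
        refine e.ind fun a b => ?_
        simp only [Finset.mem_union, SimpleGraph.mem_edgeFinset, SimpleGraph.mem_edgeSet,
          SimpleGraph.compl_adj, SimpleGraph.top_adj]
        constructor
        · rintro (h | h)
          exacts [h.ne, h.1]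
        · intro hne
          by_cases hG : G.Adj a b
          · exact Or.inl hG
          · exact Or.inr ⟨hne, hG⟩
      rw [← Finset.card_union_of_disjoint hdisj, hunion,
        SimpleGraph.card_edgeFinset_top_eq_card_choose_two, Fintype.card_fin]
    have hcard : G.edgeSet.ncard = G.edgeFinset.card := by
      rw [← SimpleGraph.coe_edgeFinset, Set.ncard_coe_finset]
    omega
  have hne : 0 ∈ {m | ∃ G : SimpleGraph (Fin n), HasInducedDecompositionInto F G ∧
      G.edgeSet.ncard = m} := by
    refine ⟨⊥, ⟨Empty, fun t => t.elim, fun t => t.elim, fun t => t.elim, ?_⟩, by simp⟩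
    intro e he
    simp at he
  have hsup : exInd F n ≤ n.choose 2 - (n + 1) / 2 :=
    csSup_le ⟨0, hne⟩ key
  have hchoose : n.choose 2 = n * (n - 1) / 2 := Nat.choose_two_right n
  have h1 : n - 1 ≤ n.choose 2 := by
    rw [hchoose, Nat.le_div_iff_mul_le (by norm_num)]
    calc (n - 1) * 2 ≤ (n - 1) * n := Nat.mul_le_mul_left _ hn
      _ = n * (n - 1) := Nat.mul_comm _ _
  have hcex : (n + 1) / 2 ≤ cex F n := by
    unfold cex
    omega
  have h2 : (n : ℝ) / 2 ≤ (((n + 1) / 2 : ℕ) : ℝ) := by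
    rw [div_le_iff₀ (by norm_num : (0:ℝ) < 2)]
    have h3 : n ≤ ((n + 1) / 2) * 2 := by omega
    exact_mod_cast h3
  calc (n : ℝ) / 2 ≤ (((n + 1) / 2 : ℕ) : ℝ) := h2
    _ ≤ (cex F n : ℝ) := by exact_mod_cast hcex
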